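/- Tsirelson's space T is not iteration stable: there exist type determining sequences (x_n) and (y_n) in T such that lim_n lim_m ∥x_n + y_m∥ does not exist. -/

import Mathlib

/-- Restriction `E x` of a finitely supported sequence `x` to a set `E ⊆ ℕ`. -/
noncomputable def tRes (E : Finset ℕ) (x : ℕ →₀ ℝ) : ℕ →₀ ℝ := x.filter (· ∈ E)

/-- An admissible family for the Tsirelson norm: `n ≤ E_1 < ... < E_n`. -/
def tAdm (n : ℕ) (E : Fin n → Finset ℕ) : Prop :=
  (∀ i : Fin n, ∀ a ∈ E i, n ≤ a) ∧
  (∀ i j : Fin n, i < j → ∀ a ∈ E i, ∀ b ∈ E j, a < b)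

/-- `N` satisfies the implicit equation of the Tsirelson norm:
`‖x‖ = max(‖x‖_∞, sup_{n ≥ 2, n ≤ E_1 < ... < E_n} (1/2) ∑ ‖E_i x‖)`. -/
def tEq (N : (ℕ →₀ ℝ) → ℝ) : Prop :=
  ∀ x : ℕ →₀ ℝ, N x = max (⨆ i : ℕ, |x i|)
    (sSup {s : ℝ | ∃ n : ℕ, 2 ≤ n ∧ ∃ E : Fin n → Finset ℕ, tAdm n E ∧
      s = (1 / 2) * ∑ i, N (tRes (E i) x)})

/-- `‖x‖_k = sup (1/2) ∑_{i=1}^k ‖E_i x‖` over `k ≤ E_1 < ... < E_k`. -/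
noncomputable def tNormk (N : (ℕ →₀ ℝ) → ℝ) (k : ℕ) (x : ℕ →₀ ℝ) : ℝ :=
  sSup {s : ℝ | ∃ E : Fin k → Finset ℕ, tAdm k E ∧
    s = (1 / 2) * ∑ i, N (tRes (E i) x)}

/-- `z_n = (2/n²) ∑_{i=1}^{n²} e_{n³+i}`. -/
noncomputable def zvec (n : ℕ) : ℕ →₀ ℝ :=
  ∑ i ∈ Finset.range (n ^ 2), Finsupp.single (n ^ 3 + i + 1) (2 / (n ^ 2 : ℝ))

namespace T13

/-- the set of admissible-split values -/
def Sset (N : (ℕ →₀ ℝ) → ℝ) (x : ℕ →₀ ℝ) : Set ℝ :=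
  {s : ℝ | ∃ n : ℕ, 2 ≤ n ∧ ∃ E : Fin n → Finset ℕ, tAdm n E ∧
      s = (1 / 2) * ∑ i, N (tRes (E i) x)}

lemma tEq_eq {N} (hN : tEq N) (x : ℕ →₀ ℝ) :
    N x = max (⨆ i : ℕ, |x i|) (sSup (Sset N x)) := hN x

/-- ℓ¹ norm -/
def l1 (x : ℕ →₀ ℝ) : ℝ := ∑ c ∈ x.support, |x c|

@[simp] lemma tRes_apply (E : Finset ℕ) (x : ℕ →₀ ℝ) (a : ℕ) :
    tRes E x a = if a ∈ E then x a else 0 := by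
  classical
  simp [tRes, Finsupp.filter_apply]

@[simp] lemma tRes_zero (E : Finset ℕ) : tRes E 0 = 0 := by
  ext a; simp

lemma tRes_apply_mem {E : Finset ℕ} {x : ℕ →₀ ℝ} {a : ℕ} (h : a ∈ E) :
    tRes E x a = x a := by simp [h]

lemma tRes_support (E : Finset ℕ) (x : ℕ →₀ ℝ) :
    (tRes E x).support = x.support.filter (· ∈ E) := by
  classical
  ext a
  simp only [tRes_apply, Finsupp.mem_support_iff, Finset.mem_filter]
  by_cases h : a ∈ E <;> simp [h]

lemma tRes_support_subset (E : Finset ℕ) (x : ℕ →₀ ℝ) :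
    (tRes E x).support ⊆ x.support := by
  rw [tRes_support]; exact Finset.filter_subset _ _

lemma tRes_eq_self {E : Finset ℕ} {x : ℕ →₀ ℝ} (h : x.support ⊆ E) :
    tRes E x = x := by
  ext a
  rw [tRes_apply]
  by_cases ha : a ∈ E
  · simp [ha]
  · simp [ha]
    by_contra h'
    exact ha (h (Finsupp.mem_support_iff.2 fun h0 => h' h0.symm))

lemma tRes_eq_zero {E : Finset ℕ} {x : ℕ →₀ ℝ} (h : ∀ a ∈ x.support, a ∉ E) :
    tRes E x = 0 := by
  ext a
  rw [tRes_apply]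
  by_cases ha : a ∈ E
  · simp [ha]
    by_contra h'
    exact h a (Finsupp.mem_support_iff.2 h') ha
  · simp [ha]

lemma tRes_tRes (E F : Finset ℕ) (x : ℕ →₀ ℝ) :
    tRes E (tRes F x) = tRes (E ∩ F) x := by
  ext a; simp only [tRes_apply, Finset.mem_inter]
  by_cases hE : a ∈ E <;> by_cases hF : a ∈ F <;> simp [hE, hF]

lemma tRes_inter_supp (E : Finset ℕ) (x : ℕ →₀ ℝ) :
    tRes (E ∩ x.support) x = tRes E x := by
  ext a; simp only [tRes_apply, Finset.mem_inter]
  by_cases hE : a ∈ E <;> by_cases hs : a ∈ x.support <;>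
    simp [hE, hs]
  exact (Finsupp.notMem_support_iff.1 hs).symm

lemma tRes_add (E : Finset ℕ) (x y : ℕ →₀ ℝ) :
    tRes E (x + y) = tRes E x + tRes E y := by
  ext a; simp only [tRes_apply, Finsupp.add_apply]
  by_cases h : a ∈ E <;> simp [h]

lemma tRes_single (E : Finset ℕ) (b : ℕ) (c : ℝ) :
    tRes E (Finsupp.single b c) = if b ∈ E then Finsupp.single b c else 0 := by
  ext a
  by_cases hb : b ∈ E <;> by_cases hab : a = b
  · subst hab; simp [hb]
  · simp only [tRes_apply, hb, if_true]
    by_cases ha : a ∈ E <;> simp [ha, Finsupp.single_apply, Ne.symm hab, hab]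
  · subst hab; simp [hb]
  · simp only [tRes_apply, hb, if_false]
    by_cases ha : a ∈ E <;> simp [ha, Finsupp.single_apply, hab, Ne.symm hab]

end T13

namespace T13

lemma l1_nonneg (x : ℕ →₀ ℝ) : 0 ≤ l1 x :=
  Finset.sum_nonneg fun _ _ => abs_nonneg _

@[simp] lemma l1_zero : l1 (0 : ℕ →₀ ℝ) = 0 := by simp [l1]

lemma l1_single (b : ℕ) (c : ℝ) : l1 (Finsupp.single b c) = |c| := by
  by_cases hc : c = 0
  · simp [hc]
  · rw [l1, Finsupp.support_single_ne_zero _ hc]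
    simp

lemma abs_le_l1 (x : ℕ →₀ ℝ) (a : ℕ) : |x a| ≤ l1 x := by
  by_cases ha : a ∈ x.support
  · exact Finset.single_le_sum (fun c _ => abs_nonneg (x c)) ha
  · rw [Finsupp.notMem_support_iff.1 ha]
    simpa using l1_nonneg x

lemma l1_tRes (E : Finset ℕ) (x : ℕ →₀ ℝ) :
    l1 (tRes E x) = ∑ c ∈ x.support.filter (· ∈ E), |x c| := by
  rw [l1, tRes_support]
  refine Finset.sum_congr rfl fun c hc => ?_
  rw [tRes_apply, if_pos (Finset.mem_filter.1 hc).2]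

lemma l1_tRes_le (E : Finset ℕ) (x : ℕ →₀ ℝ) : l1 (tRes E x) ≤ l1 x := by
  rw [l1_tRes]
  exact Finset.sum_le_sum_of_subset_of_nonneg (Finset.filter_subset _ _)
    (fun c _ _ => abs_nonneg _)

lemma tAdm_mono {n : ℕ} {E F : Fin n → Finset ℕ} (h : ∀ i, F i ⊆ E i)
    (hE : tAdm n E) : tAdm n F :=
  ⟨fun i a ha => hE.1 i a (h i ha),
   fun i j hij a ha b hb => hE.2 i j hij a (h i ha) b (h j hb)⟩

lemma tAdm_disjoint {n : ℕ} {E : Fin n → Finset ℕ} (hE : tAdm n E)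
    {i j : Fin n} (hij : i ≠ j) : Disjoint (E i) (E j) := by
  rw [Finset.disjoint_left]
  intro a hai haj
  rcases lt_or_gt_of_ne hij with h | h
  · exact absurd (hE.2 i j h a hai a haj) (lt_irrefl a)
  · exact absurd (hE.2 j i h a haj a hai) (lt_irrefl a)

/-- the sum of ℓ¹ norms of pieces is at most the ℓ¹ norm -/
lemma l1_sum_tRes_le {n : ℕ} {E : Fin n → Finset ℕ} (hE : tAdm n E) (x : ℕ →₀ ℝ) :
    ∑ i, l1 (tRes (E i) x) ≤ l1 x := by
  classical
  have : ∑ i, l1 (tRes (E i) x)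
      = ∑ c ∈ Finset.univ.biUnion (fun i : Fin n => x.support.filter (· ∈ E i)), |x c| := by
    rw [Finset.sum_biUnion]
    · exact Finset.sum_congr rfl fun i _ => l1_tRes (E i) x
    · intro i _ j _ hij
      have hd := tAdm_disjoint hE hij
      rw [Finset.disjoint_left] at hd
      show Disjoint _ _
      rw [Finset.disjoint_left]
      intro a ha haj
      exact hd (Finset.mem_filter.1 ha).2 (Finset.mem_filter.1 haj).2
  rw [this]
  exact Finset.sum_le_sum_of_subset_of_nonneg
    (fun c hc => (Finset.mem_filter.1 (Finset.mem_biUnion.1 hc).choose_spec.2).1)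
    (fun c _ _ => abs_nonneg _)

lemma l1_add_disjoint {x y : ℕ →₀ ℝ} (h : Disjoint x.support y.support) :
    l1 (x + y) = l1 x + l1 y := by
  classical
  rw [l1, Finsupp.support_add_eq h]
  rw [Finset.sum_union h]
  congr 1
  · refine Finset.sum_congr rfl fun c hc => ?_
    have : y c = 0 := Finsupp.notMem_support_iff.1 (Finset.disjoint_left.1 h hc)
    simp [this]
  · refine Finset.sum_congr rfl fun c hc => ?_
    have : x c = 0 := Finsupp.notMem_support_iff.1 (Finset.disjoint_right.1 h hc)
    simp [this]

end T13

namespace T13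

variable {N : (ℕ →₀ ℝ) → ℝ}

lemma mem_Sset {x : ℕ →₀ ℝ} {n : ℕ} (h2 : 2 ≤ n) {E : Fin n → Finset ℕ}
    (hE : tAdm n E) : (1 / 2) * ∑ i, N (tRes (E i) x) ∈ Sset N x :=
  ⟨n, h2, E, hE, rfl⟩

/-- any element of `Sset` comes from a family of subsets of the support -/
lemma Sset_elim {x : ℕ →₀ ℝ} {s : ℝ} (hs : s ∈ Sset N x) :
    ∃ n : ℕ, 2 ≤ n ∧ ∃ E : Fin n → Finset ℕ, tAdm n E ∧ (∀ i, E i ⊆ x.support) ∧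
      s = (1 / 2) * ∑ i, N (tRes (E i) x) := by
  obtain ⟨n, h2, E, hE, rfl⟩ := hs
  refine ⟨n, h2, fun i => E i ∩ x.support,
    tAdm_mono (fun i => Finset.inter_subset_left) hE,
    fun i => Finset.inter_subset_right, ?_⟩
  congr 1
  exact Finset.sum_congr rfl fun i _ => by rw [tRes_inter_supp]

/-- N 0 = 0 -/
lemma nZero (hN : tEq N) : N 0 = 0 := by
  have e := tEq_eq hN 0
  have h1 : (⨆ i : ℕ, |(0 : ℕ →₀ ℝ) i|) = 0 := by simp [ciSup_const]
  rw [h1] at e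
  have hmem : ∀ n : ℕ, 2 ≤ n → ((n : ℝ) / 2) * N 0 ∈ Sset N (0 : ℕ →₀ ℝ) := by
    intro n h2
    have : (1 / 2 : ℝ) * ∑ _i : Fin n, N (tRes ∅ 0) ∈ Sset N (0 : ℕ →₀ ℝ) :=
      mem_Sset h2 ⟨fun i a ha => absurd ha (Finset.notMem_empty a),
        fun i j _ a ha => absurd ha (Finset.notMem_empty a)⟩
    simpa [Finset.sum_const, mul_comm, mul_assoc, mul_left_comm, div_eq_mul_inv]
      using this
  have hge : 0 ≤ N 0 := by rw [e]; exact le_max_left 0 _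
  rcases eq_or_lt_of_le hge with h | h
  · exact h.symm
  · exfalso
    have hub : ¬ BddAbove (Sset N (0 : ℕ →₀ ℝ)) := by
      rintro ⟨B, hB⟩
      obtain ⟨n, hn⟩ := exists_nat_gt (2 * B / N 0)
      have h2n : 2 ≤ n + 2 := by omega
      have := hB (hmem (n + 2) h2n)
      have hlt : 2 * B / N 0 < ((n : ℝ) + 2) := by
        calc 2 * B / N 0 < (n : ℝ) := hn
        _ ≤ (n : ℝ) + 2 := by linarith
      rw [div_lt_iff₀ h] at hlt
      have : ((n + 2 : ℕ) : ℝ) / 2 * N 0 ≤ B := this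
      push_cast at this
      nlinarith
    rw [Real.sSup_of_not_bddAbove hub] at e
    simp at e
    exact absurd e (ne_of_gt h)

/-- N x ≤ l1 x -/
lemma nLeL1 (hN : tEq N) : ∀ x : ℕ →₀ ℝ, N x ≤ l1 x := by
  suffices H : ∀ d : ℕ, ∀ x : ℕ →₀ ℝ, x.support.card ≤ d → N x ≤ l1 x by
    intro x; exact H x.support.card x le_rfl
  intro d
  induction d with
  | zero =>
    intro x hx
    have : x = 0 := by
      rwa [Nat.le_zero, Finset.card_eq_zero, Finsupp.support_eq_empty] at hx
    rw [this, nZero hN]; simp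
  | succ d ih =>
    intro x hx
    have e := tEq_eq hN x
    have hsup : (⨆ i : ℕ, |x i|) ≤ l1 x := Real.iSup_le (abs_le_l1 x) (l1_nonneg x)
    have hS : ∀ s ∈ Sset N x, s ≤ max (l1 x) (N x / 2) := by
      intro s hs
      obtain ⟨n, h2, E, hE, hsub, rfl⟩ := Sset_elim hs
      by_cases hfull : ∃ j, x.support ⊆ E j
      · obtain ⟨j, hj⟩ := hfull
        have hterm : ∀ i, i ≠ j → N (tRes (E i) x) = 0 := by
          intro i hij
          have : tRes (E i) x = 0 := by
            apply tRes_eq_zero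
            intro a ha hai
            exact Finset.disjoint_left.1 (tAdm_disjoint hE hij) hai (hj ha)
          rw [this, nZero hN]
        have : ∑ i, N (tRes (E i) x) = N x := by
          rw [Finset.sum_eq_single_of_mem j (Finset.mem_univ j)
            (fun i _ hij => hterm i hij), tRes_eq_self hj]
        rw [this]
        refine le_trans (le_of_eq (by ring)) (le_max_right _ _)
      · push_neg at hfull
        have : ∀ i, N (tRes (E i) x) ≤ l1 (tRes (E i) x) := by
          intro i
          apply ih
          have hcard : (tRes (E i) x).support.card < x.support.card := by
            apply Finset.card_lt_card
            rw [tRes_support]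
            refine ⟨Finset.filter_subset _ _, ?_⟩
            intro hcon
            obtain ⟨a, ha, hna⟩ := Finset.not_subset.1 (hfull i)
            exact hna (Finset.mem_filter.1 (hcon ha)).2
          omega
        calc (1 / 2 : ℝ) * ∑ i, N (tRes (E i) x)
            ≤ (1 / 2 : ℝ) * ∑ i, l1 (tRes (E i) x) := by
              apply mul_le_mul_of_nonneg_left (Finset.sum_le_sum fun i _ => this i)
              norm_num
          _ ≤ (1 / 2 : ℝ) * l1 x := by
              apply mul_le_mul_of_nonneg_left (l1_sum_tRes_le hE x); norm_num
          _ ≤ l1 x := by have := l1_nonneg x; linarith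
          _ ≤ max (l1 x) (N x / 2) := le_max_left _ _
    have hsSup : sSup (Sset N x) ≤ max (l1 x) (N x / 2) :=
      Real.sSup_le hS (le_max_of_le_left (l1_nonneg x))
    have hle : N x ≤ max (l1 x) (N x / 2) :=
      le_trans (le_of_eq e) (max_le (hsup.trans (le_max_left _ _)) hsSup)
    rcases le_max_iff.1 hle with h | h
    · exact h
    · linarith [l1_nonneg x]

end T13

namespace T13

variable {N : (ℕ →₀ ℝ) → ℝ}

lemma nNonneg' (hN : tEq N) (x : ℕ →₀ ℝ) : 0 ≤ N x := by
  rw [tEq_eq hN x]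
  refine le_max_of_le_left ?_
  refine le_trans (abs_nonneg (x 0)) ?_
  exact le_ciSup ⟨l1 x, Set.forall_mem_range.2 (abs_le_l1 x)⟩ 0

lemma Sset_bddAbove (hN : tEq N) (x : ℕ →₀ ℝ) : BddAbove (Sset N x) := by
  refine ⟨l1 x / 2, fun s hs => ?_⟩
  obtain ⟨n, h2, E, hE, rfl⟩ := hs
  have h1 : ∑ i, N (tRes (E i) x) ≤ ∑ i, l1 (tRes (E i) x) :=
    Finset.sum_le_sum fun i _ => nLeL1 hN _
  have h2' := l1_sum_tRes_le hE x
  have : ∑ i, N (tRes (E i) x) ≤ l1 x := le_trans h1 h2'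
  linarith

lemma nGeS (hN : tEq N) {x : ℕ →₀ ℝ} {s : ℝ} (hs : s ∈ Sset N x) : s ≤ N x := by
  refine le_trans (le_csSup (Sset_bddAbove hN x) hs) ?_
  rw [tEq_eq hN x]; exact le_max_right _ _

lemma nGeApply (hN : tEq N) (x : ℕ →₀ ℝ) (a : ℕ) : |x a| ≤ N x := by
  rw [tEq_eq hN x]
  exact le_max_of_le_left (le_ciSup ⟨l1 x, Set.forall_mem_range.2 (abs_le_l1 x)⟩ a)

/-- general upper bound: N x ≤ max (pointwise bound) (l1 x / 2) -/
lemma nLe_sup_l1 (hN : tEq N) (x : ℕ →₀ ℝ) {c : ℝ} (hc : ∀ a, |x a| ≤ c) (hc0 : 0 ≤ c) :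
    N x ≤ max c (l1 x / 2) := by
  rw [tEq_eq hN x]
  refine max_le (le_max_of_le_left (Real.iSup_le hc hc0)) ?_
  refine le_max_of_le_right (Real.sSup_le ?_ (by linarith [l1_nonneg x]))
  intro s hs
  obtain ⟨n, h2, E, hE, rfl⟩ := hs
  have h1 : ∑ i, N (tRes (E i) x) ≤ l1 x :=
    le_trans (Finset.sum_le_sum fun i _ => nLeL1 hN _) (l1_sum_tRes_le hE x)
  linarith

/-- N of a single -/
lemma nSingle (hN : tEq N) (b : ℕ) (c : ℝ) : N (Finsupp.single b c) = |c| := by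
  refine le_antisymm ?_ ?_
  · simpa [l1_single] using nLeL1 hN (Finsupp.single b c)
  · simpa using nGeApply hN (Finsupp.single b c) b

/-- restriction decreases the norm -/
lemma nResLe (hN : tEq N) (F : Finset ℕ) (x : ℕ →₀ ℝ) : N (tRes F x) ≤ N x := by
  rw [tEq_eq hN (tRes F x)]
  refine max_le (Real.iSup_le (fun a => ?_) (nNonneg' hN x)) ?_
  · rw [tRes_apply]
    by_cases h : a ∈ F
    · rw [if_pos h]; exact nGeApply hN x a
    · rw [if_neg h, abs_zero]; exact nNonneg' hN x
  · refine Real.sSup_le (fun s hs => ?_) (nNonneg' hN x)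
    obtain ⟨n, h2, E, hE, rfl⟩ := hs
    refine nGeS hN (x := x) ?_
    have : ∀ i, tRes (E i) (tRes F x) = tRes (E i ∩ F) x := fun i => tRes_tRes _ _ _
    have hmem : (1 / 2 : ℝ) * ∑ i, N (tRes ((fun i => E i ∩ F) i) x) ∈ Sset N x :=
      mem_Sset h2 (tAdm_mono (fun i => Finset.inter_subset_left) hE)
    simpa [this] using hmem

/-- a disjointly-supported summand is a restriction, so N of it is ≤ N of the sum -/
lemma nLeAddDisj (hN : tEq N) {x y : ℕ →₀ ℝ} (h : Disjoint x.support y.support) :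
    N x ≤ N (x + y) := by
  have : tRes x.support (x + y) = x := by
    rw [tRes_add, tRes_eq_self (le_refl _ : x.support ⊆ x.support),
      tRes_eq_zero (fun a ha => Finset.disjoint_right.1 h ha), add_zero]
  calc N x = N (tRes x.support (x + y)) := by rw [this]
  _ ≤ N (x + y) := nResLe hN _ _

/-- assembly: to bound N x ≤ T it is enough to bound pointwise and on Sset allowing N x / 2 -/
lemma nAssembly (hN : tEq N) {x : ℕ →₀ ℝ} {T : ℝ} (hT : 0 ≤ T)
    (hpt : ∀ a, |x a| ≤ T)
    (hS : ∀ s ∈ Sset N x, s ≤ max T (N x / 2)) : N x ≤ T := by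
  have hle : N x ≤ max T (N x / 2) := by
    refine le_trans (le_of_eq (tEq_eq hN x)) (max_le ?_ ?_)
    · exact le_max_of_le_left (Real.iSup_le hpt hT)
    · exact Real.sSup_le hS (le_max_of_le_left hT)
  rcases le_max_iff.1 hle with h | h
  · exact h
  · nlinarith [nNonneg' hN x]

end T13

namespace T13

variable {N : (ℕ →₀ ℝ) → ℝ}

/-- triangle inequality -/
lemma nTriangle (hN : tEq N) (x y : ℕ →₀ ℝ) : N (x + y) ≤ N x + N y := by
  suffices H : ∀ d : ℕ, ∀ x y : ℕ →₀ ℝ, (x.support ∪ y.support).card ≤ d →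
      N (x + y) ≤ N x + N y by
    exact H _ x y le_rfl
  intro d
  induction d with
  | zero =>
    intro x y h
    rw [Nat.le_zero, Finset.card_eq_zero, Finset.union_eq_empty] at h
    have hx : x = 0 := Finsupp.support_eq_empty.1 h.1
    have hy : y = 0 := Finsupp.support_eq_empty.1 h.2
    rw [hx, hy]; simp [nZero hN]
  | succ d ih =>
    intro x y hcard
    have hTnn : 0 ≤ N x + N y := by
      have := nNonneg' hN x; have := nNonneg' hN y; linarith
    refine nAssembly hN hTnn (fun a => ?_) (fun s hs => ?_)
    · calc |(x + y) a| ≤ |x a| + |y a| := abs_add_le _ _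
      _ ≤ N x + N y := add_le_add (nGeApply hN x a) (nGeApply hN y a)
    · obtain ⟨n, h2, E, hE, hsub, rfl⟩ := Sset_elim hs
      by_cases hfull : ∃ j, x.support ∪ y.support ⊆ E j
      · obtain ⟨j, hj⟩ := hfull
        refine le_max_of_le_right ?_
        have hterm : ∀ i, i ≠ j → N (tRes (E i) (x + y)) = 0 := by
          intro i hij
          have hres : tRes (E i) (x + y) = 0 := by
            apply tRes_eq_zero
            intro a ha hai
            have ha' : a ∈ x.support ∪ y.support := by
              rcases Finset.mem_union.1 (Finsupp.support_add ha) with h | h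
              · exact Finset.mem_union_left _ h
              · exact Finset.mem_union_right _ h
            exact Finset.disjoint_left.1 (tAdm_disjoint hE hij) hai (hj ha')
          rw [hres, nZero hN]
        have hres : tRes (E j) (x + y) = x + y := by
          apply tRes_eq_self
          intro a ha
          have ha' : a ∈ x.support ∪ y.support := by
            rcases Finset.mem_union.1 (Finsupp.support_add ha) with h | h
            · exact Finset.mem_union_left _ h
            · exact Finset.mem_union_right _ h
          exact hj ha'
        rw [Finset.sum_eq_single_of_mem j (Finset.mem_univ j)
          (fun i _ hij => hterm i hij), hres]
        linarith
      · push_neg at hfull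
        refine le_max_of_le_left ?_
        have hle : ∀ i, N (tRes (E i) (x + y)) ≤ N (tRes (E i) x) + N (tRes (E i) y) := by
          intro i
          rw [tRes_add]
          apply ih
          have hsubU : (tRes (E i) x).support ∪ (tRes (E i) y).support ⊆
              (x.support ∪ y.support) ∩ E i := by
            intro a ha
            rcases Finset.mem_union.1 ha with h | h <;>
              rw [tRes_support] at h <;>
              rcases Finset.mem_filter.1 h with ⟨h1, h2⟩
            · exact Finset.mem_inter.2 ⟨Finset.mem_union_left _ h1, h2⟩
            · exact Finset.mem_inter.2 ⟨Finset.mem_union_right _ h1, h2⟩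
          have hlt : ((x.support ∪ y.support) ∩ E i).card < (x.support ∪ y.support).card := by
            apply Finset.card_lt_card
            refine ⟨Finset.inter_subset_left, ?_⟩
            intro hcon
            obtain ⟨a, ha, hna⟩ := Finset.not_subset.1 (hfull i)
            exact hna (Finset.mem_inter.1 (hcon ha)).2
          have := Finset.card_le_card hsubU
          omega
        have hx : (1 / 2 : ℝ) * ∑ i, N (tRes (E i) x) ≤ N x := nGeS hN (mem_Sset h2 hE)
        have hy : (1 / 2 : ℝ) * ∑ i, N (tRes (E i) y) ≤ N y := nGeS hN (mem_Sset h2 hE)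
        have hsum : ∑ i, N (tRes (E i) (x + y)) ≤
            ∑ i, N (tRes (E i) x) + ∑ i, N (tRes (E i) y) := by
          rw [← Finset.sum_add_distrib]
          exact Finset.sum_le_sum fun i _ => hle i
        linarith

end T13

namespace T13

variable {N : (ℕ →₀ ℝ) → ℝ}

lemma tRes_empty (x : ℕ →₀ ℝ) : tRes ∅ x = 0 :=
  tRes_eq_zero (fun a _ => Finset.notMem_empty a)

lemma tRes_singleton (c : ℕ) (x : ℕ →₀ ℝ) :
    tRes {c} x = Finsupp.single c (x c) := by
  ext a
  rw [tRes_apply]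
  by_cases h : a = c
  · subst h; simp
  · simp [h, Finsupp.single_apply, Ne.symm h]

/-- flat lower bound: if the support lives in `[k, ∞)` and has at most `k` points,
then `l1 x / 2 ≤ N x`. -/
lemma flatLower (hN : tEq N) (x : ℕ →₀ ℝ) (k : ℕ) (h2 : 2 ≤ k)
    (hcard : x.support.card ≤ k) (hmem : ∀ c ∈ x.support, k ≤ c) :
    l1 x / 2 ≤ N x := by
  classical
  set rk : ℕ → ℕ := fun c => (x.support.filter (· < c)).card with hrk
  have rk_lt : ∀ c ∈ x.support, rk c < k := by
    intro c hc
    have : x.support.filter (· < c) ⊂ x.support := by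
      refine ⟨Finset.filter_subset _ _, fun hcon => ?_⟩
      have := Finset.mem_filter.1 (hcon hc)
      exact absurd this.2 (lt_irrefl c)
    exact lt_of_lt_of_le (Finset.card_lt_card this) hcard
  have rk_mono : ∀ a ∈ x.support, ∀ b ∈ x.support, a < b → rk a < rk b := by
    intro a ha b hb hab
    apply Finset.card_lt_card
    refine ⟨fun c hc => ?_, fun hcon => ?_⟩
    · rcases Finset.mem_filter.1 hc with ⟨h1, h2⟩
      exact Finset.mem_filter.2 ⟨h1, lt_trans h2 hab⟩
    · have := Finset.mem_filter.1 (hcon (Finset.mem_filter.2 ⟨ha, hab⟩))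
      exact absurd this.2 (lt_irrefl a)
  set E : Fin k → Finset ℕ := fun i => x.support.filter (fun c => rk c = i.1) with hE
  have hadm : tAdm k E := by
    constructor
    · intro i a ha
      exact hmem a (Finset.mem_filter.1 ha).1
    · intro i j hij a ha b hb
      rcases Finset.mem_filter.1 ha with ⟨ha1, ha2⟩
      rcases Finset.mem_filter.1 hb with ⟨hb1, hb2⟩
      by_contra hcon
      push_neg at hcon
      rcases eq_or_lt_of_le hcon with h | h
      · subst h
        rw [ha2] at hb2
        exact absurd (Fin.val_injective hb2.symm) (ne_of_gt hij)
      · have := rk_mono b hb1 a ha1 h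
        rw [ha2, hb2] at this
        exact absurd (lt_trans this hij) (lt_irrefl _)
  have hsingle : ∀ i : Fin k, ∀ a ∈ E i, ∀ b ∈ E i, a = b := by
    intro i a ha b hb
    rcases Finset.mem_filter.1 ha with ⟨ha1, ha2⟩
    rcases Finset.mem_filter.1 hb with ⟨hb1, hb2⟩
    by_contra hab
    rcases lt_or_gt_of_ne hab with h | h
    · have := rk_mono a ha1 b hb1 h; omega
    · have := rk_mono b hb1 a ha1 h; omega
  have hterm : ∀ i : Fin k, N (tRes (E i) x) = ∑ c ∈ E i, |x c| := by
    intro i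
    rcases Finset.eq_empty_or_nonempty (E i) with h | ⟨c, hc⟩
    · rw [h, tRes_empty, nZero hN]; simp
    · have hEc : E i = {c} := by
        apply Finset.eq_singleton_iff_unique_mem.2
        exact ⟨hc, fun b hb => hsingle i b hb c hc⟩
      rw [hEc, tRes_singleton, nSingle hN]
      simp
  have hcover : Finset.univ.biUnion E = x.support := by
    apply Finset.Subset.antisymm
    · intro c hc
      exact (Finset.mem_filter.1 (Finset.mem_biUnion.1 hc).choose_spec.2).1
    · intro c hc
      exact Finset.mem_biUnion.2 ⟨⟨rk c, rk_lt c hc⟩, Finset.mem_univ _,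
        Finset.mem_filter.2 ⟨hc, rfl⟩⟩
  have hdisj : ∀ i ∈ (Finset.univ : Finset (Fin k)), ∀ j ∈ Finset.univ, i ≠ j →
      Disjoint (E i) (E j) := fun i _ j _ hij => tAdm_disjoint hadm hij
  have hsum : ∑ i, N (tRes (E i) x) = l1 x := by
    rw [l1, ← hcover, Finset.sum_biUnion hdisj]
    exact Finset.sum_congr rfl fun i _ => hterm i
  have := nGeS hN (mem_Sset (x := x) h2 hadm)
  rw [hsum] at this
  linarith

end T13

namespace T13

variable {N : (ℕ →₀ ℝ) → ℝ}

lemma sum_full_piece (hN : tEq N) {x : ℕ →₀ ℝ} {n : ℕ} {E : Fin n → Finset ℕ}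
    (hE : tAdm n E) {j : Fin n} (hj : x.support ⊆ E j) :
    (1 / 2 : ℝ) * ∑ i, N (tRes (E i) x) = N x / 2 := by
  have hterm : ∀ i, i ≠ j → N (tRes (E i) x) = 0 := by
    intro i hij
    have : tRes (E i) x = 0 :=
      tRes_eq_zero fun a ha hai =>
        Finset.disjoint_left.1 (tAdm_disjoint hE hij) hai (hj ha)
    rw [this, nZero hN]
  rw [Finset.sum_eq_single_of_mem j (Finset.mem_univ j) (fun i _ hij => hterm i hij),
    tRes_eq_self hj]
  ring

lemma src_support_subset (w : ℕ →₀ ℝ) (b : ℕ) (β : ℝ) :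
    (w + Finsupp.single b β).support ⊆ insert b w.support := by
  intro a ha
  rcases Finset.mem_union.1 (Finsupp.support_add ha) with h | h
  · exact Finset.mem_insert_of_mem h
  · have := Finsupp.support_single_subset h
    simp only [Finset.mem_singleton] at this
    exact this ▸ Finset.mem_insert_self _ _

lemma src_apply_self {w : ℕ →₀ ℝ} {b : ℕ} (hb : b ∉ w.support) (β : ℝ) :
    (w + Finsupp.single b β) b = β := by
  rw [Finsupp.add_apply, Finsupp.notMem_support_iff.1 hb, Finsupp.single_eq_same, zero_add]

lemma src_apply_ne {w : ℕ →₀ ℝ} {b a : ℕ} (hab : a ≠ b) (β : ℝ) :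
    (w + Finsupp.single b β) a = w a := by
  rw [Finsupp.add_apply, Finsupp.single_eq_of_ne' (Ne.symm hab), add_zero]

lemma tRes_src_no_b {w : ℕ →₀ ℝ} {b : ℕ} {β : ℝ} {E : Finset ℕ} (hb : b ∉ E) :
    tRes E (w + Finsupp.single b β) = tRes E w := by
  rw [tRes_add, tRes_single, if_neg hb, add_zero]

lemma tRes_src_b {w : ℕ →₀ ℝ} {b : ℕ} {β : ℝ} {E : Finset ℕ} (hb : b ∈ E) :
    tRes E (w + Finsupp.single b β) = tRes E w + Finsupp.single b β := by
  rw [tRes_add, tRes_single, if_pos hb]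

/-- monotonicity in the coefficient of a single far coordinate -/
lemma nMonoSingle (hN : tEq N) (w : ℕ →₀ ℝ) {p : ℕ} (hp : p ∉ w.support)
    {β β' : ℝ} (h0 : 0 ≤ β) (hββ : β ≤ β') :
    N (w + Finsupp.single p β) ≤ N (w + Finsupp.single p β') := by
  classical
  suffices H : ∀ d : ℕ, ∀ w : ℕ →₀ ℝ, w.support.card ≤ d → p ∉ w.support →
      N (w + Finsupp.single p β) ≤ N (w + Finsupp.single p β') by
    exact H _ w le_rfl hp
  intro d
  induction d with
  | zero =>
    intro w hw hbw
    rw [Nat.le_zero, Finset.card_eq_zero, Finsupp.support_eq_empty] at hw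
    subst hw
    simp only [zero_add]
    rw [nSingle hN, nSingle hN]
    rw [abs_of_nonneg h0, abs_of_nonneg (h0.trans hββ)]
    exact hββ
  | succ d ih =>
    intro w hw hbw
    by_cases hβ0 : β = 0
    · subst hβ0
      simp only [Finsupp.single_zero, add_zero]
      exact nLeAddDisj hN (by
        rw [Finset.disjoint_right]
        intro a ha
        have := Finsupp.support_single_subset ha
        simp only [Finset.mem_singleton] at this
        subst this; exact hbw)
    have hβpos : 0 < β := lt_of_le_of_ne h0 (Ne.symm hβ0)
    set src := w + Finsupp.single p β with hsrc
    set tgt := w + Finsupp.single p β' with htgt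
    have hT0 : 0 ≤ N tgt := nNonneg' hN tgt
    refine nAssembly hN hT0 (fun c => ?_) (fun s hs => ?_)
    · by_cases hab : c = p
      · subst hab
        rw [hsrc, src_apply_self hbw]
        have := nGeApply hN tgt c
        rw [htgt, src_apply_self hbw] at this
        calc |β| = β := abs_of_nonneg h0
        _ ≤ β' := hββ
        _ ≤ |β'| := le_abs_self β'
        _ ≤ N tgt := this
      · rw [hsrc, src_apply_ne hab]
        have := nGeApply hN tgt c
        rw [htgt, src_apply_ne hab] at this
        exact this
    · obtain ⟨n, h2, E, hE, hsub, rfl⟩ := Sset_elim hs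
      by_cases hfull : ∃ j, src.support ⊆ E j
      · obtain ⟨j, hj⟩ := hfull
        rw [sum_full_piece hN hE hj]
        exact le_max_right _ _
      refine le_max_of_le_left ?_
      push_neg at hfull
      have hkey : ∀ i, N (tRes (E i) src) ≤ N (tRes (E i) tgt) := by
        intro i
        by_cases hbE : p ∈ E i
        · rw [tRes_src_b (β := β) hbE, tRes_src_b (β := β') hbE]
          apply ih
          · -- proper piece
            have hsupp : p ∈ src.support := by
              rw [Finsupp.mem_support_iff, hsrc, src_apply_self hbw]
              exact hβ0
            have hws : ¬ w.support ⊆ E i := by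
              intro hcon
              apply hfull i
              intro a ha
              rcases Finset.mem_insert.1 (src_support_subset w p β ha) with h | h
              · exact h ▸ hbE
              · exact hcon h
            have hlt : (tRes (E i) w).support.card < w.support.card := by
              apply Finset.card_lt_card
              rw [tRes_support]
              refine ⟨Finset.filter_subset _ _, fun hcon => ?_⟩
              obtain ⟨a, ha, hna⟩ := Finset.not_subset.1 hws
              exact hna (Finset.mem_filter.1 (hcon ha)).2
            omega
          · rw [tRes_support]
            intro hcon
            exact hbw (Finset.mem_filter.1 hcon).1
        · rw [tRes_src_no_b (β := β) hbE, tRes_src_no_b (β := β') hbE]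
      calc (1 / 2 : ℝ) * ∑ i, N (tRes (E i) src)
          ≤ (1 / 2 : ℝ) * ∑ i, N (tRes (E i) tgt) := by
            apply mul_le_mul_of_nonneg_left (Finset.sum_le_sum fun i _ => hkey i)
            norm_num
        _ ≤ N tgt := nGeS hN (mem_Sset h2 hE)

end T13

namespace T13

variable {N : (ℕ →₀ ℝ) → ℝ}

lemma tRes_union_notmem {A : Finset ℕ} {b : ℕ} {w : ℕ →₀ ℝ} (hb : b ∉ w.support) :
    tRes (A ∪ {b}) w = tRes A w := by
  ext a
  simp only [tRes_apply, Finset.mem_union, Finset.mem_singleton]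
  by_cases hA : a ∈ A
  · simp [hA]
  · simp only [hA, false_or]
    by_cases hab : a = b
    · subst hab
      simp [Finsupp.notMem_support_iff.1 hb]
    · simp [hab]

lemma not_mem_of_gt {w : ℕ →₀ ℝ} {b : ℕ} (hb : ∀ c ∈ w.support, c < b) :
    b ∉ w.support := fun h => lt_irrefl b (hb b h)

/-- shifting the far singleton to the right does not decrease the norm -/
lemma nShiftLe (hN : tEq N) {b b' : ℕ} (h2' : 2 ≤ b') :
    ∀ d : ℕ, ∀ w : ℕ →₀ ℝ, w.support.card ≤ d →
    (∀ c ∈ w.support, c < b) → (∀ c ∈ w.support, c < b') →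
    N (w + Finsupp.single b 1) ≤ N (w + Finsupp.single b' 1) := by
  classical
  intro d
  induction d with
  | zero =>
    intro w hw _ _
    rw [Nat.le_zero, Finset.card_eq_zero, Finsupp.support_eq_empty] at hw
    subst hw
    simp only [zero_add, nSingle hN]
    exact le_rfl
  | succ d ih =>
    intro w hw hb hb'
    by_cases hbb : b = b'
    · subst hbb; exact le_rfl
    have hbw : b ∉ w.support := not_mem_of_gt hb
    have hbw' : b' ∉ w.support := not_mem_of_gt hb'
    set src := w + Finsupp.single b 1 with hsrc
    set tgt := w + Finsupp.single b' 1 with htgt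
    have htgtb' : |tgt b'| = 1 := by rw [htgt, src_apply_self hbw']; norm_num
    have hT0 : 0 ≤ N tgt := nNonneg' hN tgt
    have hT1 : 1 ≤ N tgt := by
      have := nGeApply hN tgt b'; rwa [htgtb'] at this
    refine nAssembly hN hT0 (fun c => ?_) (fun s hs => ?_)
    · by_cases hcb : c = b
      · subst hcb
        rw [hsrc, src_apply_self hbw]
        simpa using hT1
      · rw [hsrc, src_apply_ne hcb]
        by_cases hcb' : c = b'
        · subst hcb'
          rw [Finsupp.notMem_support_iff.1 hbw']
          simpa using hT0
        · have := nGeApply hN tgt c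
          rw [htgt, src_apply_ne hcb'] at this
          exact this
    · obtain ⟨n, h2, E, hE, hsub, rfl⟩ := Sset_elim hs
      by_cases hfull : ∃ j, src.support ⊆ E j
      · obtain ⟨j, hj⟩ := hfull
        rw [sum_full_piece hN hE hj]
        exact le_max_right _ _
      push_neg at hfull
      refine le_max_of_le_left ?_
      have hsub' : ∀ i, E i ⊆ insert b w.support := by
        intro i
        exact (hsub i).trans (src_support_subset w b 1)
      by_cases hbU : ∃ j, b ∈ E j
      · obtain ⟨j, hjb⟩ := hbU
        by_cases hwmeet : ∃ u, ∃ i, u ∈ E i ∧ u ∈ w.support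
        · obtain ⟨u, i₀, hu, huw⟩ := hwmeet
          have hnu : n ≤ u := hE.1 i₀ u hu
          have hub' : u < b' := hb' u huw
          set G : Fin n → Finset ℕ :=
            fun i => if i = j then (E j ∩ w.support) ∪ {b'} else E i with hG
          have hGadm : tAdm n G := by
            constructor
            · intro i a ha
              simp only [hG] at ha
              by_cases hij : i = j
              · rw [if_pos hij] at ha
                rcases Finset.mem_union.1 ha with h | h
                · exact hE.1 j a (Finset.mem_inter.1 h).1
                · rw [Finset.mem_singleton] at h
                  omega
              · rw [if_neg hij] at ha
                exact hE.1 i a ha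
            · intro i k hik a ha c hc
              simp only [hG] at ha hc
              by_cases hij : i = j <;> by_cases hkj : k = j
              · subst hij; subst hkj; exact absurd hik (lt_irrefl _)
              · -- i = j < k : show E k is impossible to meet
                subst hij
                rw [if_neg hkj] at hc
                exfalso
                rcases Finset.mem_insert.1 (hsub' k hc) with h | h
                · exact (Finset.disjoint_left.1 (tAdm_disjoint hE hkj)
                    (h ▸ hc) hjb)
                · have := hE.2 i k hik b hjb c hc
                  have := hb c h
                  omega
              · subst hkj
                rw [if_neg hij] at ha
                rw [if_pos rfl] at hc
                rcases Finset.mem_union.1 hc with h | h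
                · exact hE.2 i k hik a ha c (Finset.mem_inter.1 h).1
                · rw [Finset.mem_singleton] at h
                  subst h
                  rcases Finset.mem_insert.1 (hsub' i ha) with h | h
                  · exact absurd hjb
                      (Finset.disjoint_left.1 (tAdm_disjoint hE (Fin.ne_of_lt hik)) (h ▸ ha))
                  · exact hb' a h
              · rw [if_neg hij] at ha
                rw [if_neg hkj] at hc
                exact hE.2 i k hik a ha c hc
          have hkey : ∀ i, N (tRes (E i) src) ≤ N (tRes (G i) tgt) := by
            intro i
            by_cases hij : i = j
            · subst hij
              have hsrcp : tRes (E i) src = tRes (E i) w + Finsupp.single b 1 :=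
                tRes_src_b hjb
              have htgtp : tRes (G i) tgt = tRes (E i) w + Finsupp.single b' 1 := by
                simp only [hG, if_pos rfl]
                rw [tRes_add, tRes_union_notmem hbw', tRes_inter_supp, tRes_single,
                  if_pos (Finset.mem_union_right _ (Finset.mem_singleton_self b'))]
              rw [hsrcp, htgtp]
              have hcard : (tRes (E i) w).support.card < w.support.card := by
                apply Finset.card_lt_card
                rw [tRes_support]
                refine ⟨Finset.filter_subset _ _, fun hcon => ?_⟩
                apply hfull i
                intro a ha
                rcases Finset.mem_insert.1 (src_support_subset w b 1 ha) with h | h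
                · exact h ▸ hjb
                · exact (Finset.mem_filter.1 (hcon h)).2
              have hsup : (tRes (E i) w).support ⊆ w.support := tRes_support_subset _ _
              apply ih _ (by omega)
              · exact fun c hc => hb c (hsup hc)
              · exact fun c hc => hb' c (hsup hc)
            · simp only [hG, if_neg hij]
              have hbE : b ∉ E i :=
                Finset.disjoint_right.1 (tAdm_disjoint hE (fun h => hij h)) hjb
              have hb'E : b' ∉ E i := by
                intro h
                rcases Finset.mem_insert.1 (hsub' i h) with h' | h'
                · exact hbb h'.symm
                · exact hbw' h'
              rw [tRes_src_no_b hbE, tRes_src_no_b hb'E]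
          calc (1 / 2 : ℝ) * ∑ i, N (tRes (E i) src)
              ≤ (1 / 2 : ℝ) * ∑ i, N (tRes (G i) tgt) := by
                apply mul_le_mul_of_nonneg_left (Finset.sum_le_sum fun i _ => hkey i)
                norm_num
            _ ≤ N tgt := nGeS hN (mem_Sset h2 hGadm)
        · -- no set meets the support of w : only the b-piece counts
          push_neg at hwmeet
          have hpieces : ∀ i, i ≠ j → N (tRes (E i) src) = 0 := by
            intro i hij
            have : tRes (E i) src = 0 := by
              apply tRes_eq_zero
              intro a ha haE
              rcases Finset.mem_insert.1 (hsub' i haE) with h | h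
              · exact Finset.disjoint_left.1 (tAdm_disjoint hE hij) (h ▸ haE) hjb
              · exact hwmeet a i haE h
            rw [this, nZero hN]
          have hpj : N (tRes (E j) src) ≤ 1 := by
            have : tRes (E j) src = Finsupp.single b 1 := by
              rw [tRes_src_b hjb]
              have : tRes (E j) w = 0 := by
                apply tRes_eq_zero
                intro a ha haE
                exact hwmeet a j haE ha
              rw [this, zero_add]
            rw [this, nSingle hN]; norm_num
          have : ∑ i, N (tRes (E i) src) ≤ 1 := by
            rw [Finset.sum_eq_single_of_mem j (Finset.mem_univ j)
              (fun i _ hij => hpieces i hij)]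
            exact hpj
          nlinarith
      · -- b in no set : pieces are the same for src and tgt
        push_neg at hbU
        have hkey : ∀ i, N (tRes (E i) src) = N (tRes (E i) tgt) := by
          intro i
          have hb'E : b' ∉ E i := by
            intro h
            rcases Finset.mem_insert.1 (hsub' i h) with h' | h'
            · exact hbb h'.symm
            · exact hbw' h'
          rw [tRes_src_no_b (hbU i), tRes_src_no_b hb'E]
        calc (1 / 2 : ℝ) * ∑ i, N (tRes (E i) src)
            = (1 / 2 : ℝ) * ∑ i, N (tRes (E i) tgt) := by
              congr 1; exact Finset.sum_congr rfl fun i _ => hkey i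
          _ ≤ N tgt := nGeS hN (mem_Sset h2 hE)

/-- position of the far singleton does not matter -/
lemma nShift (hN : tEq N) {w : ℕ →₀ ℝ} {b b' : ℕ} (h2 : 2 ≤ b) (h2' : 2 ≤ b')
    (hb : ∀ c ∈ w.support, c < b) (hb' : ∀ c ∈ w.support, c < b') :
    N (w + Finsupp.single b 1) = N (w + Finsupp.single b' 1) :=
  le_antisymm (nShiftLe hN h2' _ w le_rfl hb hb')
    (nShiftLe hN h2 _ w le_rfl hb' hb)

end T13

namespace T13

variable {N : (ℕ →₀ ℝ) → ℝ}

/-- the flat block: `2/K` on `[p, p+K)` -/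
noncomputable def zb (p K : ℕ) : ℕ →₀ ℝ :=
  Finsupp.onFinset (Finset.Ico p (p + K))
    (fun a => if a ∈ Finset.Ico p (p + K) then (2 : ℝ) / K else 0)
    (by intro a h; by_contra hc; exact h (if_neg hc))

lemma zb_apply (p K a : ℕ) :
    zb p K a = if a ∈ Finset.Ico p (p + K) then (2 : ℝ) / K else 0 := rfl

lemma zb_support {p K : ℕ} (hK : 1 ≤ K) : (zb p K).support = Finset.Ico p (p + K) := by
  ext a
  rw [Finsupp.mem_support_iff, zb_apply]
  by_cases h : a ∈ Finset.Ico p (p + K)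
  · simp only [h, if_true, iff_true]
    positivity
  · simp [h]

lemma zb_abs_le (p K a : ℕ) : |zb p K a| ≤ 2 / K := by
  rw [zb_apply]
  by_cases h : a ∈ Finset.Ico p (p + K)
  · rw [if_pos h, abs_of_nonneg (by positivity)]
  · rw [if_neg h, abs_zero]; positivity

lemma l1_zb {p K : ℕ} (hK : 1 ≤ K) : l1 (zb p K) = 2 := by
  rw [l1, zb_support hK]
  have : ∀ a ∈ Finset.Ico p (p + K), |zb p K a| = 2 / K := by
    intro a ha
    rw [zb_apply, if_pos ha, abs_of_nonneg (by positivity)]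
  rw [Finset.sum_congr rfl this, Finset.sum_const, Nat.card_Ico, Nat.add_sub_cancel_left, nsmul_eq_mul]
  have hK0 : (K : ℝ) ≠ 0 := by positivity
  field_simp

lemma chunk_abs_le (p K : ℕ) (C : Finset ℕ) (a : ℕ) :
    |tRes C (zb p K) a| ≤ 2 / K := by
  rw [tRes_apply]
  by_cases h : a ∈ C
  · rw [if_pos h]; exact zb_abs_le p K a
  · rw [if_neg h, abs_zero]; positivity

lemma chunk_n_le (hN : tEq N) (p K : ℕ) (C : Finset ℕ) :
    N (tRes C (zb p K)) ≤ l1 (tRes C (zb p K)) / 2 + 2 / K := by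
  have h := nLe_sup_l1 hN (tRes C (zb p K)) (chunk_abs_le p K C) (by positivity)
  have h1 := l1_nonneg (tRes C (zb p K))
  have h2 : (0:ℝ) ≤ 2 / K := by positivity
  rcases le_max_iff.1 h with h' | h' <;> linarith

lemma l1_chunk_le_two {p K : ℕ} (hK : 1 ≤ K) (C : Finset ℕ) :
    l1 (tRes C (zb p K)) ≤ 2 := by
  have := l1_tRes_le C (zb p K)
  rwa [l1_zb hK] at this

lemma n_zb (hN : tEq N) {p K : ℕ} (h2K : 2 ≤ K) (hKp : K ≤ p) : N (zb p K) = 1 := by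
  have h2p : 2 ≤ p := le_trans h2K hKp
  have hK1 : 1 ≤ K := by omega
  refine le_antisymm ?_ ?_
  · have h := nLe_sup_l1 hN (zb p K) (zb_abs_le p K) (by positivity)
    rw [l1_zb hK1] at h
    have h2 : (2:ℝ) / K ≤ 1 := by
      rw [div_le_one (by positivity)]
      exact_mod_cast h2K
    rcases le_max_iff.1 h with h' | h' <;> linarith
  · have h := flatLower hN (zb p K) p h2p ?_ ?_
    · rw [l1_zb hK1] at h; linarith
    · rw [zb_support hK1, Nat.card_Ico]; omega
    · intro c hc
      rw [zb_support hK1] at hc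
      exact (Finset.mem_Ico.1 hc).1

lemma tRes_union_zero {A B : Finset ℕ} {w : ℕ →₀ ℝ} (hB : ∀ a ∈ B, a ∉ w.support) :
    tRes (A ∪ B) w = tRes A w := by
  ext a
  simp only [tRes_apply, Finset.mem_union]
  by_cases hA : a ∈ A
  · simp [hA]
  · simp only [hA, false_or]
    by_cases hBa : a ∈ B
    · simp [hBa, Finsupp.notMem_support_iff.1 (hB a hBa)]
    · simp [hBa]

end T13

namespace T13

variable {N : (ℕ →₀ ℝ) → ℝ}

/-- lower bound: the far block dominates a far unit singleton -/
lemma la2 (hN : tEq N) {p K : ℕ} (h2K : 2 ≤ K) (hKp : K ≤ p) :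
    ∀ d : ℕ, ∀ w : ℕ →₀ ℝ, w.support.card ≤ d → (∀ c ∈ w.support, c < p) →
    ∀ b : ℕ, 2 ≤ b → (∀ c ∈ w.support, c < b) →
    N (w + Finsupp.single b 1) ≤ N (w + zb p K) := by
  classical
  have hK1 : 1 ≤ K := by omega
  have hNzb : N (zb p K) = 1 := n_zb hN h2K hKp
  intro d
  induction d with
  | zero =>
    intro w hw _ b _ _
    rw [Nat.le_zero, Finset.card_eq_zero, Finsupp.support_eq_empty] at hw
    subst hw
    rw [zero_add, zero_add, nSingle hN, hNzb]
    norm_num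
  | succ d ih =>
    intro w hw hwp b h2b hwb
    have hbw : b ∉ w.support := not_mem_of_gt hwb
    have hdisj : Disjoint w.support (zb p K).support := by
      rw [Finset.disjoint_right, zb_support hK1]
      intro a ha haw
      exact absurd (hwp a haw) (not_lt.2 (Finset.mem_Ico.1 ha).1)
    set src := w + Finsupp.single b 1 with hsrc
    set tgt := w + zb p K with htgt
    have hT0 : 0 ≤ N tgt := nNonneg' hN tgt
    have hT1 : 1 ≤ N tgt := by
      have : N (zb p K) ≤ N (zb p K + w) := nLeAddDisj hN hdisj.symm
      rw [hNzb, add_comm] at this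
      exact this
    have hNwT : N w ≤ N tgt := nLeAddDisj hN hdisj
    refine nAssembly hN hT0 (fun c => ?_) (fun s hs => ?_)
    · by_cases hcb : c = b
      · subst hcb
        rw [hsrc, src_apply_self hbw]
        simpa using hT1
      · rw [hsrc, src_apply_ne hcb]
        exact le_trans (nGeApply hN w c) hNwT
    · obtain ⟨n, h2, E, hE, hsub, rfl⟩ := Sset_elim hs
      by_cases hfull : ∃ j, src.support ⊆ E j
      · obtain ⟨j, hj⟩ := hfull
        rw [sum_full_piece hN hE hj]
        exact le_max_right _ _
      push_neg at hfull
      refine le_max_of_le_left ?_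
      have hsub' : ∀ i, E i ⊆ insert b w.support :=
        fun i => (hsub i).trans (src_support_subset w b 1)
      by_cases hbU : ∃ j, b ∈ E j
      · obtain ⟨j, hjb⟩ := hbU
        by_cases hwmeet : ∃ u, ∃ i, u ∈ E i ∧ u ∈ w.support
        · obtain ⟨u, i₀, hu, huw⟩ := hwmeet
          have hnu : n ≤ u := hE.1 i₀ u hu
          have hup : u < p := hwp u huw
          set G : Fin n → Finset ℕ :=
            fun i => if i = j then (E j ∩ w.support) ∪ (zb p K).support else E i with hG
          have hGadm : tAdm n G := by
            constructor
            · intro i a ha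
              simp only [hG] at ha
              by_cases hij : i = j
              · rw [if_pos hij] at ha
                rcases Finset.mem_union.1 ha with h | h
                · exact hE.1 j a (Finset.mem_inter.1 h).1
                · rw [zb_support hK1] at h
                  have := (Finset.mem_Ico.1 h).1
                  omega
              · rw [if_neg hij] at ha
                exact hE.1 i a ha
            · intro i k hik a ha c hc
              simp only [hG] at ha hc
              by_cases hij : i = j <;> by_cases hkj : k = j
              · subst hij; subst hkj; exact absurd hik (lt_irrefl _)
              · subst hij
                rw [if_neg hkj] at hc
                exfalso
                rcases Finset.mem_insert.1 (hsub' k hc) with h | h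
                · exact (Finset.disjoint_left.1 (tAdm_disjoint hE hkj) (h ▸ hc) hjb)
                · have := hE.2 i k hik b hjb c hc
                  have := hwb c h
                  omega
              · subst hkj
                rw [if_neg hij] at ha
                rw [if_pos rfl] at hc
                rcases Finset.mem_union.1 hc with h | h
                · exact hE.2 i k hik a ha c (Finset.mem_inter.1 h).1
                · rw [zb_support hK1] at h
                  have hcp := (Finset.mem_Ico.1 h).1
                  rcases Finset.mem_insert.1 (hsub' i ha) with h' | h'
                  · exact absurd hjb
                      (Finset.disjoint_left.1 (tAdm_disjoint hE (Fin.ne_of_lt hik)) (h' ▸ ha))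
                  · have := hwp a h'
                    omega
              · rw [if_neg hij] at ha
                rw [if_neg hkj] at hc
                exact hE.2 i k hik a ha c hc
          have hkey : ∀ i, N (tRes (E i) src) ≤ N (tRes (G i) tgt) := by
            intro i
            by_cases hij : i = j
            · subst hij
              have hsrcp : tRes (E i) src = tRes (E i) w + Finsupp.single b 1 :=
                tRes_src_b hjb
              have htgtp : tRes (G i) tgt = tRes (E i) w + zb p K := by
                simp only [hG, if_pos rfl]
                rw [htgt, tRes_add]
                congr 1
                · rw [tRes_union_zero, tRes_inter_supp]
                  intro a ha
                  exact Finset.disjoint_right.1 hdisj ha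
                · apply tRes_eq_self
                  exact Finset.subset_union_right
              rw [hsrcp, htgtp]
              have hcard : (tRes (E i) w).support.card < w.support.card := by
                apply Finset.card_lt_card
                rw [tRes_support]
                refine ⟨Finset.filter_subset _ _, fun hcon => ?_⟩
                apply hfull i
                intro a ha
                rcases Finset.mem_insert.1 (src_support_subset w b 1 ha) with h | h
                · exact h ▸ hjb
                · exact (Finset.mem_filter.1 (hcon h)).2
              have hsup : (tRes (E i) w).support ⊆ w.support := tRes_support_subset _ _
              exact ih _ (by omega) (fun c hc => hwp c (hsup hc)) b h2b
                (fun c hc => hwb c (hsup hc))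
            · simp only [hG, if_neg hij]
              have hbE : b ∉ E i :=
                Finset.disjoint_right.1 (tAdm_disjoint hE (fun h => hij h)) hjb
              rw [tRes_src_no_b hbE, htgt, tRes_add]
              have : tRes (E i) (zb p K) = 0 := by
                apply tRes_eq_zero
                intro a ha haE
                rcases Finset.mem_insert.1 (hsub' i haE) with h | h
                · exact hbE (h ▸ haE)
                · exact Finset.disjoint_right.1 hdisj ha h
              rw [this, add_zero]
          calc (1 / 2 : ℝ) * ∑ i, N (tRes (E i) src)
              ≤ (1 / 2 : ℝ) * ∑ i, N (tRes (G i) tgt) := by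
                apply mul_le_mul_of_nonneg_left (Finset.sum_le_sum fun i _ => hkey i)
                norm_num
            _ ≤ N tgt := nGeS hN (mem_Sset h2 hGadm)
        · push_neg at hwmeet
          obtain ⟨j, hjb⟩ := (⟨j, hjb⟩ : ∃ j, b ∈ E j)
          have hpieces : ∀ i, i ≠ j → N (tRes (E i) src) = 0 := by
            intro i hij
            have : tRes (E i) src = 0 := by
              apply tRes_eq_zero
              intro a ha haE
              rcases Finset.mem_insert.1 (hsub' i haE) with h | h
              · exact Finset.disjoint_left.1 (tAdm_disjoint hE hij) (h ▸ haE) hjb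
              · exact hwmeet a i haE h
            rw [this, nZero hN]
          have hpj : N (tRes (E j) src) ≤ 1 := by
            have : tRes (E j) src = Finsupp.single b 1 := by
              rw [tRes_src_b hjb]
              have : tRes (E j) w = 0 :=
                tRes_eq_zero fun a ha haE => hwmeet a j haE ha
              rw [this, zero_add]
            rw [this, nSingle hN]; norm_num
          have : ∑ i, N (tRes (E i) src) ≤ 1 := by
            rw [Finset.sum_eq_single_of_mem j (Finset.mem_univ j)
              (fun i _ hij => hpieces i hij)]
            exact hpj
          nlinarith
      · push_neg at hbU
        have hkey : ∀ i, N (tRes (E i) src) = N (tRes (E i) w) := by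
          intro i
          rw [tRes_src_no_b (hbU i)]
        calc (1 / 2 : ℝ) * ∑ i, N (tRes (E i) src)
            = (1 / 2 : ℝ) * ∑ i, N (tRes (E i) w) := by
              congr 1; exact Finset.sum_congr rfl fun i _ => hkey i
          _ ≤ N w := nGeS hN (mem_Sset h2 hE)
          _ ≤ N tgt := hNwT

end T13

namespace T13
set_option maxHeartbeats 1000000

variable {N : (ℕ →₀ ℝ) → ℝ}

lemma tRes_support_subset' (C : Finset ℕ) (x : ℕ →₀ ℝ) : (tRes C x).support ⊆ C := by
  rw [tRes_support]
  intro a ha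
  exact (Finset.mem_filter.1 ha).2

/-- upper bound: a far chunk of the block is dominated by a far singleton
carrying half of its ℓ¹ mass, up to an error `2M'/K`. -/
lemma la3 (hN : tEq N) {p K M' : ℕ} (h2K : 2 ≤ K) (hKp : K ≤ p)
    (hM1 : 1 ≤ M') (hMp : M' ≤ p) :
    ∀ dc : ℕ, ∀ w : ℕ →₀ ℝ, ∀ C : Finset ℕ,
    w.support.card * (K + 1) + C.card ≤ dc →
    (∀ c ∈ w.support, c < M') → C ⊆ (zb p K).support →
    N (w + tRes C (zb p K)) ≤
      N (w + Finsupp.single (p + K) (l1 (tRes C (zb p K)) / 2)) + 2 * M' / K := by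
  classical
  have hK1 : 1 ≤ K := by omega
  have hK0 : (0:ℝ) < K := by exact_mod_cast (by omega : 0 < K)
  have herr0 : (0:ℝ) ≤ 2 * M' / K := by positivity
  have herr2K : (2:ℝ) / K ≤ 2 * M' / K := by
    have h1M : (1:ℝ) ≤ M' := by exact_mod_cast hM1
    have h2M : (2:ℝ) ≤ 2 * M' := by linarith
    exact (div_le_div_iff_of_pos_right hK0).2 h2M
  intro dc
  induction dc with
  | zero =>
    intro w C hm _ _
    have hw0 : w.support.card = 0 ∧ C.card = 0 := by
      constructor <;> nlinarith [Nat.le_zero.1 hm]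
    have hw : w = 0 := Finsupp.support_eq_empty.1 (Finset.card_eq_zero.1 hw0.1)
    have hC : C = ∅ := Finset.card_eq_zero.1 hw0.2
    subst hw; subst hC
    simp only [tRes_empty, add_zero, zero_add]
    rw [nZero hN]
    have := nNonneg' hN (Finsupp.single (p + K) (l1 (0 : ℕ →₀ ℝ) / 2))
    linarith
  | succ dc ih =>
    intro w C hm hwM hC
    set Z := tRes C (zb p K) with hZ
    set val := l1 Z / 2 with hval
    set b := p + K with hb
    have hval0 : 0 ≤ val := by
      rw [hval]; have := l1_nonneg Z; linarith
    have hsuppZC : Z.support ⊆ C := tRes_support_subset' C (zb p K)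
    have hsuppZ : Z.support ⊆ Finset.Ico p (p + K) := by
      refine (tRes_support_subset C (zb p K)).trans ?_
      rw [zb_support hK1]
    have hbw : b ∉ w.support := by
      intro h
      have := hwM b h
      omega
    have hdisjwZ : Disjoint w.support Z.support := by
      rw [Finset.disjoint_right]
      intro a ha haw
      have h1 := (Finset.mem_Ico.1 (hsuppZ ha)).1
      have := hwM a haw
      omega
    set src := w + Z with hsrc
    set tgt := w + Finsupp.single b val with htgt
    have hT0 : 0 ≤ N tgt := nNonneg' hN tgt
    have hNwT : N w ≤ N tgt := by
      apply nLeAddDisj hN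
      rw [Finset.disjoint_right]
      intro a ha
      have := Finsupp.support_single_subset ha
      rw [Finset.mem_singleton] at this
      subst this
      exact hbw
    have hvalT : val ≤ N tgt := by
      have := nGeApply hN tgt b
      rw [htgt, src_apply_self hbw, abs_of_nonneg hval0] at this
      exact this
    refine nAssembly hN (by linarith) (fun c => ?_) (fun s hs => ?_)
    · rw [hsrc, Finsupp.add_apply]
      calc |w c + Z c| ≤ |w c| + |Z c| := abs_add_le _ _
        _ ≤ N tgt + 2 * M' / K := by
          have h1 : |w c| ≤ N w := nGeApply hN w c
          have h2 : |Z c| ≤ 2 / K := chunk_abs_le p K C c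
          have := hNwT
          linarith [herr2K]
    · obtain ⟨n, h2, E, hE, hsub, rfl⟩ := Sset_elim hs
      by_cases hfull : ∃ j, src.support ⊆ E j
      · obtain ⟨j, hj⟩ := hfull
        rw [sum_full_piece hN hE hj]
        exact le_max_right _ _
      push_neg at hfull
      refine le_max_of_le_left ?_
      have hsub' : ∀ i, E i ⊆ w.support ∪ Z.support := by
        intro i
        refine (hsub i).trans ?_
        rw [hsrc]
        exact Finsupp.support_add
      have hpieces : ∀ i, tRes (E i) src = tRes (E i) w + tRes (E i) Z :=
        fun i => by rw [hsrc, tRes_add]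
      by_cases hwmeet : ∃ u, ∃ i, u ∈ E i ∧ u ∈ w.support
      · obtain ⟨u, i₀, hu, huw⟩ := hwmeet
        have hnu : n ≤ u := hE.1 i₀ u hu
        have huM : u < M' := hwM u huw
        by_cases hpure : ∃ q, (∃ a, a ∈ E q ∧ a ∈ Z.support) ∧ ∀ a ∈ E q, a ∉ w.support
        · -- pure strategy : triangle everywhere, send the whole value to the pure slot
          obtain ⟨q, ⟨a₀, ha₀E, ha₀Z⟩, hqw⟩ := hpure
          have ha₀p : p ≤ a₀ := (Finset.mem_Ico.1 (hsuppZ ha₀Z)).1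
          set G : Fin n → Finset ℕ :=
            fun i => if i = q then {b} else E i ∩ w.support with hG
          have hGadm : tAdm n G := by
            constructor
            · intro i a ha
              simp only [hG] at ha
              by_cases hiq : i = q
              · rw [if_pos hiq, Finset.mem_singleton] at ha
                subst ha; omega
              · rw [if_neg hiq] at ha
                exact hE.1 i a (Finset.mem_inter.1 ha).1
            · intro i k hik a ha c hc
              simp only [hG] at ha hc
              by_cases hiq : i = q <;> by_cases hkq : k = q
              · subst hiq; subst hkq; exact absurd hik (lt_irrefl _)
              · subst hiq
                rw [if_neg hkq] at hc
                exfalso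
                have hcw := (Finset.mem_inter.1 hc).2
                have hcE := (Finset.mem_inter.1 hc).1
                have := hE.2 i k hik a₀ ha₀E c hcE
                have := hwM c hcw
                omega
              · subst hkq
                rw [if_neg hiq] at ha
                rw [if_pos rfl, Finset.mem_singleton] at hc
                subst hc
                have := hwM a (Finset.mem_inter.1 ha).2
                omega
              · rw [if_neg hiq] at ha
                rw [if_neg hkq] at hc
                exact hE.2 i k hik a (Finset.mem_inter.1 ha).1 c (Finset.mem_inter.1 hc).1
          have hterm : ∀ i, N (tRes (E i) src) ≤
              N (tRes (E i) w) + (l1 (tRes (E i) Z) / 2 + 2 / K) := by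
            intro i
            rw [hpieces i]
            refine le_trans (nTriangle hN _ _) ?_
            have hchunk : N (tRes (E i) Z) ≤ l1 (tRes (E i) Z) / 2 + 2 / K := by
              have := chunk_n_le hN p K (E i ∩ C)
              rwa [← tRes_tRes] at this
            linarith
          have htgtterm : ∀ i, N (tRes (G i) tgt) =
              N (tRes (E i) w) + (if i = q then val else 0) := by
            intro i
            by_cases hiq : i = q
            · subst hiq
              simp only [hG, if_pos rfl]
              rw [tRes_singleton, htgt]
              have : (w + Finsupp.single b val) b = val := src_apply_self hbw val
              rw [this, nSingle hN, abs_of_nonneg hval0]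
              have hres0 : tRes (E i) w = 0 :=
                tRes_eq_zero fun a ha haE => hqw a haE ha
              rw [hres0, nZero hN]
              simp
            · simp only [hG, if_neg hiq]
              rw [htgt, tRes_add]
              have h1 : tRes (E i ∩ w.support) w = tRes (E i) w := tRes_inter_supp _ _
              have h2 : tRes (E i ∩ w.support) (Finsupp.single b val) = 0 := by
                rw [tRes_single, if_neg]
                intro h
                exact hbw (Finset.mem_inter.1 h).2
              rw [h1, h2, add_zero, add_zero]
          have hsum1 : ∑ i, N (tRes (E i) src) ≤
              ∑ i, N (tRes (E i) w) + (l1 Z / 2 + (n : ℝ) * (2 / K)) := by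
            calc ∑ i, N (tRes (E i) src)
                ≤ ∑ i, (N (tRes (E i) w) + (l1 (tRes (E i) Z) / 2 + 2 / K)) :=
                  Finset.sum_le_sum fun i _ => hterm i
              _ = ∑ i, N (tRes (E i) w) + ((∑ i, l1 (tRes (E i) Z)) / 2
                    + (n : ℝ) * (2 / K)) := by
                  rw [Finset.sum_add_distrib, Finset.sum_add_distrib, Finset.sum_div,
                    Finset.sum_const, Finset.card_univ, Fintype.card_fin, nsmul_eq_mul]
              _ ≤ _ := by
                  have := l1_sum_tRes_le hE Z
                  have h2K' : (0:ℝ) < 2 / K := by positivity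
                  have : (∑ i, l1 (tRes (E i) Z)) / 2 ≤ l1 Z / 2 := by linarith
                  linarith
          have hsum2 : ∑ i, N (tRes (G i) tgt) = ∑ i, N (tRes (E i) w) + val := by
            rw [Finset.sum_congr rfl fun i _ => htgtterm i, Finset.sum_add_distrib,
              Finset.sum_ite_eq' Finset.univ q (fun _ => val), if_pos (Finset.mem_univ q)]
          have hsumtgt : (1/2 : ℝ) * ∑ i, N (tRes (G i) tgt) ≤ N tgt :=
            nGeS hN (mem_Sset h2 hGadm)
          have hnM : (n : ℝ) ≤ (M' : ℝ) := by exact_mod_cast (by omega : n ≤ M')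
          have hexp : (n : ℝ) * (2 / K) ≤ 2 * M' / K := by
            rw [div_eq_mul_inv, div_eq_mul_inv]
            have hKinv : (0:ℝ) ≤ (K:ℝ)⁻¹ := by positivity
            nlinarith
          rw [← hval] at hsum1
          nlinarith [hsum1, hsum2, hsumtgt]
        · -- no pure set
          push_neg at hpure
          by_cases hzmeet : ∃ j, ∃ a, a ∈ E j ∧ a ∈ Z.support
          · obtain ⟨j, aj, hajE, hajZ⟩ := hzmeet
            have hajp : p ≤ aj := (Finset.mem_Ico.1 (hsuppZ hajZ)).1
            obtain ⟨uj, hujE, hujw⟩ := hpure j ⟨aj, hajE, hajZ⟩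
            have hujM : uj < M' := hwM uj hujw
            -- no other set meets Z
            have hunique : ∀ i, i ≠ j → ∀ a ∈ E i, a ∉ Z.support := by
              intro i hij a haE haZ
              obtain ⟨ui, huiE, huiw⟩ := hpure i ⟨a, haE, haZ⟩
              have huiM : ui < M' := hwM ui huiw
              have hap : p ≤ a := (Finset.mem_Ico.1 (hsuppZ haZ)).1
              rcases lt_or_gt_of_ne hij with h | h
              · have := hE.2 i j h a haE uj hujE
                omega
              · have := hE.2 j i h aj hajE ui huiE
                omega
            set C' := E j ∩ C with hC'
            have hzresj : tRes (E j) Z = tRes C' (zb p K) := by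
              rw [hZ, tRes_tRes]
            set val' := l1 (tRes C' (zb p K)) / 2 with hval'
            have hval'0 : 0 ≤ val' := by
              rw [hval']; have := l1_nonneg (tRes C' (zb p K)); linarith
            have hval'le : val' ≤ val := by
              rw [hval', hval]
              have : l1 (tRes C' (zb p K)) ≤ l1 Z := by
                rw [← hzresj]
                exact l1_tRes_le (E j) Z
              linarith
            -- measure decrease for the IH
            have hmes : (tRes (E j) w).support.card * (K + 1) + C'.card ≤ dc := by
              have hC'K : C'.card ≤ K := by
                have h1 : C' ⊆ (zb p K).support := fun a ha =>
                  hC (Finset.mem_inter.1 ha).2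
                have := Finset.card_le_card h1
                rw [zb_support hK1, Nat.card_Ico] at this
                omega
              by_cases hws : w.support ⊆ E j
              · -- then C ⊄ E j (else full), so C' ⊊ C
                have hCC : ¬ C ⊆ E j := by
                  intro hcon
                  apply hfull j
                  intro a ha
                  rw [hsrc] at ha
                  rcases Finset.mem_union.1 (Finsupp.support_add ha) with h | h
                  · exact hws h
                  · exact hcon (hsuppZC h)
                have hC'C : C'.card < C.card := by
                  apply Finset.card_lt_card
                  refine ⟨fun a ha => (Finset.mem_inter.1 ha).2, fun hcon => ?_⟩
                  obtain ⟨a, ha, hna⟩ := Finset.not_subset.1 hCC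
                  exact hna (Finset.mem_inter.1 (hcon ha)).1
                have hle : (tRes (E j) w).support.card ≤ w.support.card :=
                  Finset.card_le_card (tRes_support_subset _ _)
                nlinarith [hm]
              · have hcard : (tRes (E j) w).support.card < w.support.card := by
                  apply Finset.card_lt_card
                  rw [tRes_support]
                  refine ⟨Finset.filter_subset _ _, fun hcon => ?_⟩
                  obtain ⟨a, ha, hna⟩ := Finset.not_subset.1 hws
                  exact hna (Finset.mem_filter.1 (hcon ha)).2
                nlinarith [hm]
            have hIH : N (tRes (E j) w + tRes C' (zb p K)) ≤
                N (tRes (E j) w + Finsupp.single b val') + 2 * M' / K := by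
              rw [hval', hb]
              apply ih _ _ hmes
              · intro c hc
                exact hwM c (tRes_support_subset _ _ hc)
              · intro a ha
                exact hC (Finset.mem_inter.1 ha).2
            have hmono : N (tRes (E j) w + Finsupp.single b val') ≤
                N (tRes (E j) w + Finsupp.single b val) := by
              apply nMonoSingle hN _ ?_ hval'0 hval'le
              intro h
              exact hbw (tRes_support_subset _ _ h)
            set G : Fin n → Finset ℕ :=
              fun i => if i = j then (E j ∩ w.support) ∪ {b} else E i ∩ w.support with hG
            have hGadm : tAdm n G := by
              constructor
              · intro i a ha
                simp only [hG] at ha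
                by_cases hij : i = j
                · rw [if_pos hij] at ha
                  rcases Finset.mem_union.1 ha with h | h
                  · exact hE.1 j a (Finset.mem_inter.1 h).1
                  · rw [Finset.mem_singleton] at h
                    subst h; omega
                · rw [if_neg hij] at ha
                  exact hE.1 i a (Finset.mem_inter.1 ha).1
              · intro i k hik a ha c hc
                simp only [hG] at ha hc
                by_cases hij : i = j <;> by_cases hkj : k = j
                · subst hij; subst hkj; exact absurd hik (lt_irrefl _)
                · subst hij
                  rw [if_neg hkj] at hc
                  exfalso
                  have hcw := (Finset.mem_inter.1 hc).2
                  have := hE.2 i k hik aj hajE c (Finset.mem_inter.1 hc).1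
                  have := hwM c hcw
                  omega
                · subst hkj
                  rw [if_neg hij] at ha
                  rw [if_pos rfl] at hc
                  rcases Finset.mem_union.1 hc with h | h
                  · exact hE.2 i k hik a (Finset.mem_inter.1 ha).1 c (Finset.mem_inter.1 h).1
                  · rw [Finset.mem_singleton] at h
                    subst h
                    have := hwM a (Finset.mem_inter.1 ha).2
                    omega
                · rw [if_neg hij] at ha
                  rw [if_neg hkj] at hc
                  exact hE.2 i k hik a (Finset.mem_inter.1 ha).1 c (Finset.mem_inter.1 hc).1
            have htgtj : tRes (G j) tgt = tRes (E j) w + Finsupp.single b val := by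
              simp only [hG, if_pos rfl]
              rw [htgt, tRes_add]
              congr 1
              · rw [tRes_union_notmem hbw, tRes_inter_supp]
              · rw [tRes_single, if_pos (Finset.mem_union_right _ (Finset.mem_singleton_self b))]
            have hkey : ∀ i, N (tRes (E i) src) ≤
                N (tRes (G i) tgt) + (if i = j then (2 * M' / K : ℝ) else 0) := by
              intro i
              by_cases hij : i = j
              · subst hij
                rw [if_pos rfl, hpieces i, hzresj, htgtj]
                calc N (tRes (E i) w + tRes C' (zb p K))
                    ≤ N (tRes (E i) w + Finsupp.single b val') + 2 * M' / K := hIH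
                  _ ≤ N (tRes (E i) w + Finsupp.single b val) + 2 * M' / K := by linarith
              · rw [if_neg hij, add_zero, hpieces i]
                have hz0 : tRes (E i) Z = 0 := by
                  apply tRes_eq_zero
                  intro a ha haE
                  exact hunique i hij a haE ha
                rw [hz0, add_zero]
                have : tRes (G i) tgt = tRes (E i) w := by
                  simp only [hG, if_neg hij]
                  rw [htgt, tRes_add]
                  have h1 : tRes (E i ∩ w.support) w = tRes (E i) w := tRes_inter_supp _ _
                  have h2 : tRes (E i ∩ w.support) (Finsupp.single b val) = 0 := by
                    rw [tRes_single, if_neg]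
                    intro h
                    exact hbw (Finset.mem_inter.1 h).2
                  rw [h1, h2, add_zero]
                rw [this]
            have hsumineq : ∑ i, N (tRes (E i) src) ≤
                ∑ i, N (tRes (G i) tgt) + 2 * M' / K := by
              calc ∑ i, N (tRes (E i) src)
                  ≤ ∑ i, (N (tRes (G i) tgt) + (if i = j then (2 * M' / K : ℝ) else 0)) :=
                    Finset.sum_le_sum fun i _ => hkey i
                _ = ∑ i, N (tRes (G i) tgt) + 2 * M' / K := by
                    rw [Finset.sum_add_distrib,
                      Finset.sum_ite_eq' Finset.univ j (fun _ => (2 * M' / K : ℝ)),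
                      if_pos (Finset.mem_univ j)]
            have hsumtgt : (1/2 : ℝ) * ∑ i, N (tRes (G i) tgt) ≤ N tgt :=
              nGeS hN (mem_Sset h2 hGadm)
            nlinarith [hsumineq, hsumtgt]
          · -- no set meets Z at all
            push_neg at hzmeet
            have hkey : ∀ i, N (tRes (E i) src) = N (tRes (E i) w) := by
              intro i
              rw [hpieces i]
              have : tRes (E i) Z = 0 :=
                tRes_eq_zero fun a ha haE => hzmeet i a haE ha
              rw [this, add_zero]
            calc (1 / 2 : ℝ) * ∑ i, N (tRes (E i) src)
                = (1 / 2 : ℝ) * ∑ i, N (tRes (E i) w) := by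
                  congr 1; exact Finset.sum_congr rfl fun i _ => hkey i
              _ ≤ N w := nGeS hN (mem_Sset h2 hE)
              _ ≤ N tgt + 2 * M' / K := by linarith
      · -- no set meets the support of w : everything is a chunk
        push_neg at hwmeet
        have hterm : ∀ i, N (tRes (E i) src) ≤ l1 (tRes (E i) Z) := by
          intro i
          rw [hpieces i]
          have : tRes (E i) w = 0 :=
            tRes_eq_zero fun a ha haE => hwmeet a i haE ha
          rw [this, zero_add]
          exact nLeL1 hN _
        calc (1 / 2 : ℝ) * ∑ i, N (tRes (E i) src)
            ≤ (1 / 2 : ℝ) * ∑ i, l1 (tRes (E i) Z) := by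
              apply mul_le_mul_of_nonneg_left (Finset.sum_le_sum fun i _ => hterm i)
              norm_num
          _ ≤ (1 / 2 : ℝ) * l1 Z := by
              apply mul_le_mul_of_nonneg_left (l1_sum_tRes_le hE Z); norm_num
          _ = val := by rw [hval]; ring
          _ ≤ N tgt + 2 * M' / K := by linarith

end T13

namespace T13

variable {N : (ℕ →₀ ℝ) → ℝ}

/-- positions of the moving blocks -/
def an (n : ℕ) : ℕ := (n + 2) ^ 2

/-- the witnessing sequence x -/
noncomputable def xv (n : ℕ) : ℕ →₀ ℝ :=
  if Even n then zb (an n) (n + 2) else Finsupp.single (an n) 1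

/-- the witnessing sequence y -/
noncomputable def yv (m : ℕ) : ℕ →₀ ℝ := Finsupp.single (m + 3) 1

/-- the two subsequential limits -/
noncomputable def gv (n : ℕ) : ℝ := if Even n then 3 / 2 else 1

lemma an_ge (n : ℕ) : n + 2 ≤ an n := by
  have : (n + 2) * 1 ≤ (n + 2) * (n + 2) := by nlinarith
  simpa [an, pow_two] using this

lemma an_ge2 (n : ℕ) : 2 ≤ an n := le_trans (by omega) (an_ge n)

lemma sup_lt {v : ℕ →₀ ℝ} {c : ℕ} (hc : c ∈ v.support) : c ≤ v.support.sup id :=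
  Finset.le_sup (f := id) hc

/-- the limit of the type along both sequences -/
noncomputable def Lv (N : (ℕ →₀ ℝ) → ℝ) (v : ℕ →₀ ℝ) : ℝ :=
  N (v + Finsupp.single (v.support.sup id + 2) 1)

lemma keyA (hN : tEq N) (v : ℕ →₀ ℝ) :
    ∀ n, v.support.sup id + 1 ≤ n →
    Lv N v ≤ N (v + xv n) ∧
    N (v + xv n) ≤ Lv N v + 2 * (v.support.sup id + 1) / (n + 2) := by
  intro n hn
  set Mv := v.support.sup id with hMv
  have hvMv : ∀ c ∈ v.support, c ≤ Mv := fun c hc => sup_lt hc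
  have hvan : ∀ c ∈ v.support, c < an n := by
    intro c hc
    have h1 := hvMv c hc
    have := an_ge n
    omega
  have hvB : ∀ c ∈ v.support, c < Mv + 2 := by
    intro c hc; have := hvMv c hc; omega
  have herr0 : (0:ℝ) ≤ 2 * (Mv + 1) / (n + 2) := by positivity
  by_cases hpar : Even n
  · -- even : block
    have hxn : xv n = zb (an n) (n + 2) := if_pos hpar
    constructor
    · rw [hxn, Lv]
      exact la2 hN (by omega) (an_ge n) _ v le_rfl hvan (Mv + 2) (by omega) hvB
    · rw [hxn]
      set p := an n with hp
      set K := n + 2 with hK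
      have h2K : 2 ≤ K := by omega
      have hKp : K ≤ p := an_ge n
      have hK1 : 1 ≤ K := by omega
      have hMp : Mv + 1 ≤ p := by
        have := an_ge n; omega
      have hres : tRes ((zb p K).support) (zb p K) = zb p K :=
        tRes_eq_self (le_refl _)
      have hla3 := la3 hN h2K hKp (by omega : 1 ≤ Mv + 1) hMp
        (v.support.card * (K + 1) + ((zb p K).support).card) v ((zb p K).support)
        le_rfl (fun c hc => by have := hvMv c hc; omega) (le_refl _)
      rw [hres] at hla3
      have hval1 : l1 (zb p K) / 2 = 1 := by rw [l1_zb hK1]; norm_num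
      rw [hval1] at hla3
      have hshift : N (v + Finsupp.single (p + K) 1) = Lv N v := by
        rw [Lv]
        apply nShift hN (by omega) (by omega)
        · intro c hc; have := hvMv c hc; omega
        · exact hvB
      rw [hshift] at hla3
      calc N (v + zb p K) ≤ Lv N v + 2 * ((Mv:ℝ) + 1) / K := by
            have hc : ((Mv + 1 : ℕ) : ℝ) = (Mv:ℝ) + 1 := by push_cast; ring
            rw [← hc]; exact hla3
        _ = Lv N v + 2 * (Mv + 1) / (n + 2) := by rw [hK]; push_cast; ring_nf
  · -- odd : singleton, the norm is exactly the limit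
    have hxn : xv n = Finsupp.single (an n) 1 := if_neg hpar
    have heq : N (v + xv n) = Lv N v := by
      rw [hxn, Lv]
      apply nShift hN (an_ge2 n) (by omega) hvan hvB
    constructor
    · rw [heq]
    · rw [heq]; linarith

/-- (A) : x is type determining -/
lemma tendstoA (hN : tEq N) (v : ℕ →₀ ℝ) :
    Filter.Tendsto (fun n => N (v + xv n)) Filter.atTop (nhds (Lv N v)) := by
  rw [Metric.tendsto_atTop]
  intro ε hε
  set Mv := v.support.sup id with hMv
  obtain ⟨n₁, hn₁⟩ := exists_nat_gt (2 * (Mv + 1) / ε)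
  refine ⟨max n₁ (Mv + 1), fun n hn => ?_⟩
  have hn1 : n₁ ≤ n := le_trans (le_max_left _ _) hn
  have hnM : Mv + 1 ≤ n := le_trans (le_max_right _ _) hn
  obtain ⟨hlow, hup⟩ := keyA hN v n hnM
  rw [Real.dist_eq, abs_of_nonneg (by linarith)]
  have hbound : 2 * ((Mv:ℝ) + 1) / (n + 2) < ε := by
    rw [div_lt_iff₀ (by positivity)]
    rw [div_lt_iff₀ hε] at hn₁
    have hcast : (n₁ : ℝ) ≤ (n : ℝ) + 2 := by
      have : (n₁ : ℝ) ≤ (n : ℝ) := by exact_mod_cast hn1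
      linarith
    calc 2 * ((Mv:ℝ) + 1) < n₁ * ε := hn₁
      _ ≤ ((n:ℝ) + 2) * ε := by
        apply mul_le_mul_of_nonneg_right hcast (le_of_lt hε)
      _ = ε * ((n:ℝ) + 2) := by ring
  calc N (v + xv n) - Lv N v ≤ 2 * ((Mv:ℝ) + 1) / (n + 2) := by linarith
    _ < ε := hbound

/-- (B) : y is type determining -/
lemma tendstoB (hN : tEq N) (v : ℕ →₀ ℝ) :
    Filter.Tendsto (fun m => N (v + yv m)) Filter.atTop (nhds (Lv N v)) := by
  apply Filter.Tendsto.congr' ?_ (tendsto_const_nhds (x := Lv N v))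
  rw [Filter.EventuallyEq, Filter.eventually_atTop]
  refine ⟨v.support.sup id, fun m hm => ?_⟩
  rw [Lv, yv]
  apply nShift hN (by omega) (by omega)
  · intro c hc; have := sup_lt hc; omega
  · intro c hc; have := sup_lt hc; omega

/-- the exact value of the inner norms -/
lemma innerVal (hN : tEq N) (n m : ℕ) (hm : an n + n ≤ m) :
    N (xv n + yv m) = gv n := by
  have hman : an n ≤ m := by omega
  by_cases hpar : Even n
  · rw [xv, if_pos hpar, yv, gv, if_pos hpar]
    set p := an n with hp
    set K := n + 2 with hK
    have hK1 : 1 ≤ K := by omega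
    have h2K : 2 ≤ K := by omega
    have hpK : p + K ≤ m + 3 := by
      have := an_ge n
      omega
    have hm3 : m + 3 ∉ Finset.Ico p (p + K) := by
      intro h
      have := (Finset.mem_Ico.1 h).2
      omega
    have hdisj : Disjoint (zb p K).support (Finsupp.single (m+3) (1:ℝ)).support := by
      rw [zb_support hK1, Finset.disjoint_right]
      intro a ha
      have := Finsupp.support_single_subset ha
      rw [Finset.mem_singleton] at this
      subst this
      exact hm3
    have hl1 : l1 (zb p K + Finsupp.single (m+3) (1:ℝ)) = 3 := by
      rw [l1_add_disjoint hdisj, l1_zb hK1, l1_single]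
      norm_num
    refine le_antisymm ?_ ?_
    · have h := nLe_sup_l1 hN (zb p K + Finsupp.single (m+3) (1:ℝ)) (c := 1) ?_ (by norm_num)
      · rw [hl1] at h
        rcases le_max_iff.1 h with h' | h' <;> linarith
      · intro a
        rw [Finsupp.add_apply]
        by_cases ha : a = m + 3
        · subst ha
          rw [zb_apply, if_neg hm3, Finsupp.single_eq_same]
          norm_num
        · rw [Finsupp.single_eq_of_ne' (fun h => ha h.symm), add_zero]
          calc |zb p K a| ≤ 2 / K := zb_abs_le p K a
            _ ≤ 1 := by
              rw [div_le_one (by positivity)]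
              exact_mod_cast h2K
    · have h := flatLower hN (zb p K + Finsupp.single (m+3) (1:ℝ)) p (an_ge2 n) ?_ ?_
      · rw [hl1] at h; linarith
      · rw [Finsupp.support_add_eq hdisj, Finset.card_union_of_disjoint hdisj,
          zb_support hK1, Nat.card_Ico, Finsupp.support_single_ne_zero _ (by norm_num)]
        simp only [Finset.card_singleton]
        have : n + 3 ≤ (n + 2)^2 := by nlinarith
        rw [hp]; rw [hK]
        simp [an]; exact this
      · intro c hc
        rw [Finsupp.support_add_eq hdisj, Finset.mem_union] at hc
        rcases hc with h | h
        · rw [zb_support hK1] at h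
          exact (Finset.mem_Ico.1 h).1
        · rw [Finsupp.support_single_ne_zero _ (by norm_num), Finset.mem_singleton] at h
          subst h
          omega
  · rw [xv, if_neg hpar, yv, gv, if_neg hpar]
    have hne : an n ≠ m + 3 := by omega
    have hdisj : Disjoint (Finsupp.single (an n) (1:ℝ)).support
        (Finsupp.single (m+3) (1:ℝ)).support := by
      rw [Finsupp.support_single_ne_zero _ (by norm_num : (1:ℝ) ≠ 0),
        Finsupp.support_single_ne_zero _ (by norm_num : (1:ℝ) ≠ 0)]
      simp only [Finset.disjoint_singleton_left, Finset.mem_singleton]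
      omega
    have hl1 : l1 (Finsupp.single (an n) (1:ℝ) + Finsupp.single (m+3) (1:ℝ)) = 2 := by
      rw [l1_add_disjoint hdisj, l1_single, l1_single]
      norm_num
    refine le_antisymm ?_ ?_
    · have h := nLe_sup_l1 hN (Finsupp.single (an n) (1:ℝ) + Finsupp.single (m+3) (1:ℝ))
        (c := 1) ?_ (by norm_num)
      · rw [hl1] at h
        rcases le_max_iff.1 h with h' | h' <;> linarith
      · intro a
        rw [Finsupp.add_apply]
        by_cases h1 : a = an n
        · subst h1
          rw [Finsupp.single_eq_same, Finsupp.single_eq_of_ne' (fun h => hne h.symm)]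
          norm_num
        · rw [Finsupp.single_eq_of_ne' (fun h => h1 h.symm), zero_add]
          by_cases h2 : a = m + 3
          · subst h2; rw [Finsupp.single_eq_same]; norm_num
          · rw [Finsupp.single_eq_of_ne' (fun h => h2 h.symm)]; norm_num
    · have := nGeApply hN (Finsupp.single (an n) (1:ℝ) + Finsupp.single (m+3) (1:ℝ)) (an n)
      rw [Finsupp.add_apply, Finsupp.single_eq_same,
        Finsupp.single_eq_of_ne' (fun h => hne h.symm), add_zero] at this
      simpa using this

/-- (C) : the inner limits -/
lemma tendstoC (hN : tEq N) (n : ℕ) :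
    Filter.Tendsto (fun m => N (xv n + yv m)) Filter.atTop (nhds (gv n)) := by
  apply Filter.Tendsto.congr' ?_ (tendsto_const_nhds (x := gv n))
  rw [Filter.EventuallyEq, Filter.eventually_atTop]
  exact ⟨an n + n, fun m hm => (innerVal hN n m hm).symm⟩

/-- (D) : the outer limit does not exist -/
lemma noLimit : ¬ ∃ L : ℝ, Filter.Tendsto gv Filter.atTop (nhds L) := by
  rintro ⟨L, hL⟩
  have h2 : Filter.Tendsto (fun k : ℕ => 2 * k) Filter.atTop Filter.atTop :=
    Filter.tendsto_atTop_atTop.2 fun b => ⟨b, fun a ha => by omega⟩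
  have h3 : Filter.Tendsto (fun k : ℕ => 2 * k + 1) Filter.atTop Filter.atTop :=
    Filter.tendsto_atTop_atTop.2 fun b => ⟨b, fun a ha => by omega⟩
  have he : (fun k : ℕ => gv (2 * k)) = fun _ => (3/2 : ℝ) := by
    funext k
    rw [gv, if_pos ⟨k, by ring⟩]
  have ho : (fun k : ℕ => gv (2 * k + 1)) = fun _ => (1 : ℝ) := by
    funext k
    rw [gv, if_neg (by rintro ⟨r, hr⟩; omega)]
  have hL1 : L = 3/2 := by
    have := hL.comp h2
    rw [show (gv ∘ fun k : ℕ => 2 * k) = fun k : ℕ => gv (2 * k) from rfl, he] at this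
    exact tendsto_nhds_unique this tendsto_const_nhds
  have hL2 : L = 1 := by
    have := hL.comp h3
    rw [show (gv ∘ fun k : ℕ => 2 * k + 1) = fun k : ℕ => gv (2 * k + 1) from rfl, ho] at this
    exact tendsto_nhds_unique this tendsto_const_nhds
  rw [hL1] at hL2
  norm_num at hL2

end T13

/-- Tsirelson's space `T` is not iteration stable: there exist
type determining sequences `(x_n)`, `(y_n)` such that `lim_n lim_m ‖x_n + y_m‖`
does not exist (the inner limits exist, the outer one does not). -/
theorem stmt13 (N : (ℕ →₀ ℝ) → ℝ) (hN : tEq N) :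
    ∃ x y : ℕ → (ℕ →₀ ℝ),
      (∀ v : ℕ →₀ ℝ, ∃ L : ℝ,
        Filter.Tendsto (fun n => N (v + x n)) Filter.atTop (nhds L)) ∧
      (∀ v : ℕ →₀ ℝ, ∃ L : ℝ,
        Filter.Tendsto (fun n => N (v + y n)) Filter.atTop (nhds L)) ∧
      ∃ g : ℕ → ℝ,
        (∀ n, Filter.Tendsto (fun m => N (x n + y m)) Filter.atTop (nhds (g n))) ∧
        ¬ ∃ L : ℝ, Filter.Tendsto g Filter.atTop (nhds L) := by
  exact ⟨T13.xv, T13.yv, fun v => ⟨T13.Lv N v, T13.tendstoA hN v⟩,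
    fun v => ⟨T13.Lv N v, T13.tendstoB hN v⟩, T13.gv,
    fun n => T13.tendstoC hN n, T13.noLimit⟩
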